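/- Raabe's multiplication formula: for all n ≥ 0, m ≥ 1, and real x, ∑_{k=0}^{m-1} B_n(x + k/m) = m^{1-n} · B_n(m·x). -/

import Mathlib

noncomputable def B (n : ℕ) (x : ℝ) : ℝ :=
  ∑ j ∈ Finset.range (n + 1), (n.choose j : ℝ) * (bernoulli j : ℝ) * x ^ (n - j)

noncomputable def P (n : ℕ) : Polynomial ℝ :=
  (Polynomial.bernoulli n).map (algebraMap ℚ ℝ)

lemma B_eq (n : ℕ) (x : ℝ) : B n x = (P n).eval x := by
  simp only [B, P, Polynomial.bernoulli, Polynomial.map_sum, Polynomial.map_monomial,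
    Polynomial.eval_finset_sum, Polynomial.eval_monomial, eq_ratCast]
  refine Finset.sum_congr rfl fun j hj => ?_
  push_cast
  ring_nf

lemma bern_comp_add_one (n : ℕ) :
    (Polynomial.bernoulli n).comp (Polynomial.X + 1) =
      Polynomial.bernoulli n + (n : ℚ) • Polynomial.X ^ (n - 1) := by
  apply Polynomial.funext
  intro r
  simp only [Polynomial.eval_comp, Polynomial.eval_add, Polynomial.eval_X, Polynomial.eval_one,
    Polynomial.eval_smul, Polynomial.eval_pow, smul_eq_mul]
  rw [add_comm r 1, Polynomial.bernoulli_eval_one_add]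

lemma B_add_one (n : ℕ) (x : ℝ) : B n (x + 1) = B n x + n * x ^ (n - 1) := by
  have h := congrArg (fun p => Polynomial.eval x (p.map (algebraMap ℚ ℝ))) (bern_comp_add_one n)
  simp only [Polynomial.map_comp, Polynomial.map_add, Polynomial.map_smul, Polynomial.map_pow,
    Polynomial.map_X, Polynomial.map_one, Polynomial.eval_comp, Polynomial.eval_add,
    Polynomial.eval_X, Polynomial.eval_one, Polynomial.eval_smul, Polynomial.eval_pow,
    smul_eq_mul] at h
  rw [B_eq, B_eq, P]
  rw [h]
  norm_num

lemma continuous_B (n : ℕ) : Continuous (B n) := by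
  have : Continuous fun x => (P n).eval x := (P n).continuous
  simpa [← B_eq] using this

lemma hasDerivAt_B (n : ℕ) (x : ℝ) :
    HasDerivAt (B (n + 1)) ((n + 1) * B n x) x := by
  have h := (P (n + 1)).hasDerivAt x
  have hd : (P (n + 1)).derivative = Polynomial.C ((n : ℝ) + 1) * P n := by
    rw [P, Polynomial.derivative_map, Polynomial.derivative_bernoulli_add_one]
    simp [P, Polynomial.map_mul]
  rw [hd] at h
  simp only [Polynomial.eval_mul, Polynomial.eval_C] at h
  have : HasDerivAt (B (n + 1)) (((n : ℝ) + 1) * (P n).eval x) x := by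
    refine h.congr_of_eventuallyEq ?_
    filter_upwards with y using (B_eq _ _)
  rw [← B_eq] at this
  exact this

lemma integral_B_shift (n : ℕ) (a : ℝ) :
    ∫ t in (0:ℝ)..1, B n (t + a) = a ^ n := by
  have hderiv : ∀ t ∈ Set.uIcc (0:ℝ) 1,
      HasDerivAt (fun t => B (n + 1) (t + a) / (n + 1)) (B n (t + a)) t := by
    intro t _
    have h1 : HasDerivAt (fun t : ℝ => t + a) 1 t := (hasDerivAt_id t).add_const a
    have h2 := (hasDerivAt_B n (t + a)).comp t h1
    have h3 := h2.div_const ((n : ℝ) + 1)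
    have hne : (n : ℝ) + 1 ≠ 0 := by positivity
    simpa [mul_comm, mul_div_assoc, mul_div_cancel_left₀ _ hne, hne] using h3
  have hint : IntervalIntegrable (fun t => B n (t + a)) MeasureTheory.volume 0 1 :=
    ((continuous_B n).comp (continuous_id.add continuous_const)).intervalIntegrable 0 1
  rw [intervalIntegral.integral_eq_sub_of_hasDerivAt hderiv hint]
  have := B_add_one (n + 1) a
  simp only [Nat.add_sub_cancel] at this
  rw [add_comm (1:ℝ) a, this]
  field_simp
  rw [zero_add]; push_cast; ring

lemma B_nat (n m : ℕ) :
    B (n + 1) (m : ℝ) = B (n + 1) 0 + ((n : ℝ) + 1) * ∑ j ∈ Finset.range m, (j : ℝ) ^ n := by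
  induction m with
  | zero => simp
  | succ m ih =>
    have : ((m + 1 : ℕ) : ℝ) = (m : ℝ) + 1 := by push_cast; ring
    rw [this, B_add_one, ih, Finset.sum_range_succ]
    simp only [Nat.add_sub_cancel]
    push_cast
    ring

lemma integral_B_scale (n : ℕ) (c : ℝ) (hc : c ≠ 0) :
    ∫ t in (0:ℝ)..1, B n (c * t) = (B (n + 1) c - B (n + 1) 0) / (((n : ℝ) + 1) * c) := by
  have hne : (n : ℝ) + 1 ≠ 0 := by positivity
  have hderiv : ∀ t ∈ Set.uIcc (0:ℝ) 1,
      HasDerivAt (fun t => B (n + 1) (c * t) / (((n : ℝ) + 1) * c)) (B n (c * t)) t := by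
    intro t _
    have h1 : HasDerivAt (fun t : ℝ => c * t) c t := by
      simpa using (hasDerivAt_id t).const_mul c
    have h2 := ((hasDerivAt_B n (c * t)).comp t h1).div_const (((n : ℝ) + 1) * c)
    refine h2.congr_deriv ?_
    rw [div_eq_iff (mul_ne_zero hne hc)]
    ring
  have hint : IntervalIntegrable (fun t => B n (c * t)) MeasureTheory.volume 0 1 :=
    ((continuous_B n).comp (continuous_const.mul continuous_id)).intervalIntegrable 0 1
  rw [intervalIntegral.integral_eq_sub_of_hasDerivAt hderiv hint]
  rw [mul_one, mul_zero]
  ring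

lemma poly_periodic_const (p : Polynomial ℝ) (c : ℝ) (hc : 0 < c)
    (h : ∀ x : ℝ, p.eval (x + c) = p.eval x) : ∀ x : ℝ, p.eval x = p.eval 0 := by
  have key : p = Polynomial.C (p.eval 0) := by
    apply Polynomial.eq_of_infinite_eval_eq
    have hk : ∀ k : ℕ, p.eval ((k : ℝ) * c) = p.eval 0 := by
      intro k
      induction k with
      | zero => simp
      | succ k ih => push_cast; rw [add_mul, one_mul, h, ih]
    have hsub : Set.range (fun k : ℕ => (k : ℝ) * c) ⊆
        { x | p.eval x = Polynomial.eval x (Polynomial.C (p.eval 0)) } := by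
      rintro _ ⟨k, rfl⟩
      simp [hk k]
    refine Set.Infinite.mono hsub ?_
    apply Set.infinite_range_of_injective
    intro a b hab
    field_simp [hc.ne'] at hab
    exact_mod_cast hab
  intro x
  conv_lhs => rw [key]
  simp

theorem bernoulli_raabe (n m : ℕ) (hm : 1 ≤ m) (x : ℝ) :
    ∑ k ∈ Finset.range m, B n (x + k / m) = (m : ℝ) ^ ((1 : ℤ) - n) * B n (m * x) := by
  have hmpos : (0:ℝ) < m := by exact_mod_cast hm
  have hm0 : (m : ℝ) ≠ 0 := hmpos.ne'
  rcases n with _ | n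
  · simp [B, Finset.sum_const]
  have hzp : (m:ℝ) ^ ((1 : ℤ) - ((n+1 : ℕ) : ℤ)) = ((m:ℝ)^n)⁻¹ := by
    have h1 : ((1:ℤ) - ((n+1 : ℕ) : ℤ)) = -(n:ℤ) := by push_cast; ring
    rw [h1, zpow_neg, zpow_natCast]
  have hBdiff : ∀ y : ℝ, B (n+1) (y + 1) = B (n+1) y + ((n:ℝ)+1) * y ^ n := by
    intro y
    have := B_add_one (n+1) y
    simp only [Nat.add_sub_cancel] at this
    rw [this]; push_cast; ring
  set Q : Polynomial ℝ :=
    (∑ k ∈ Finset.range m, (P (n+1)).comp (Polynomial.X + Polynomial.C ((k:ℝ)/m))) -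
      Polynomial.C (((m:ℝ)^n)⁻¹) * (P (n+1)).comp (Polynomial.C (m:ℝ) * Polynomial.X) with hQdef
  have evalQ : ∀ y : ℝ, Q.eval y =
      (∑ k ∈ Finset.range m, B (n+1) (y + k/m)) - ((m:ℝ)^n)⁻¹ * B (n+1) (m * y) := by
    intro y
    simp [hQdef, Polynomial.eval_finset_sum, Polynomial.eval_comp, B_eq]
  have hper : ∀ y : ℝ, Q.eval (y + 1/m) = Q.eval y := by
    intro y
    rw [evalQ, evalQ]
    have harg : (m:ℝ) * (y + 1/m) = m * y + 1 := by rw [mul_add, mul_one_div, div_self hm0]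
    have e1 : (∑ k ∈ Finset.range m, B (n+1) (y + 1/m + k/m))
        = (∑ k ∈ Finset.range m, B (n+1) (y + k/m)) + ((n:ℝ)+1) * y ^ n := by
      have step : ∀ k : ℕ, y + 1/m + (k:ℝ)/m = y + ((k+1 : ℕ):ℝ)/m := by
        intro k; push_cast; field_simp; ring
      calc (∑ k ∈ Finset.range m, B (n+1) (y + 1/m + k/m))
          = ∑ k ∈ Finset.range m, B (n+1) (y + ((k+1:ℕ):ℝ)/m) :=
            Finset.sum_congr rfl fun k _ => by rw [step k]
        _ = (∑ k ∈ Finset.range (m+1), B (n+1) (y + (k:ℝ)/m)) - B (n+1) (y + ((0:ℕ):ℝ)/m) := by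
            rw [Finset.sum_range_succ' (fun k : ℕ => B (n+1) (y + (k:ℝ)/m)) m]; ring
        _ = (∑ k ∈ Finset.range m, B (n+1) (y + (k:ℝ)/m)) + B (n+1) (y + (m:ℝ)/m)
              - B (n+1) y := by
            rw [Finset.sum_range_succ (fun k : ℕ => B (n+1) (y + (k:ℝ)/m)) m]; norm_num
        _ = (∑ k ∈ Finset.range m, B (n+1) (y + k/m)) + ((n:ℝ)+1) * y ^ n := by
            rw [div_self hm0, hBdiff y]; ring
    rw [e1, harg, hBdiff ((m:ℝ)*y), mul_pow]
    have hmn : ((m:ℝ)^n)⁻¹ * (m:ℝ)^n = 1 := inv_mul_cancel₀ (pow_ne_zero _ hm0)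
    linear_combination (-((n:ℝ)+1) * y^n) * hmn
  have hconst := poly_periodic_const Q (1/m) (by positivity) hper
  have hint1 : ∀ k : ℕ, IntervalIntegrable (fun t => B (n+1) (t + (k:ℝ)/m))
      MeasureTheory.volume 0 1 := fun k =>
    ((continuous_B _).comp (continuous_id.add continuous_const)).intervalIntegrable 0 1
  have hint2 : IntervalIntegrable (fun t => ((m:ℝ)^n)⁻¹ * B (n+1) ((m:ℝ) * t))
      MeasureTheory.volume 0 1 :=
    (continuous_const.mul ((continuous_B _).comp
      (continuous_const.mul continuous_id))).intervalIntegrable 0 1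
  have hg : ∫ t in (0:ℝ)..1, (∑ k ∈ Finset.range m, B (n+1) (t + (k:ℝ)/m))
      = ∑ k ∈ Finset.range m, ((k:ℝ)/m)^(n+1) := by
    rw [intervalIntegral.integral_finset_sum (fun k _ => hint1 k)]
    exact Finset.sum_congr rfl fun k _ => integral_B_shift (n+1) _
  have hh : ∫ t in (0:ℝ)..1, ((m:ℝ)^n)⁻¹ * B (n+1) ((m:ℝ) * t)
      = ∑ k ∈ Finset.range m, ((k:ℝ)/m)^(n+1) := by
    rw [intervalIntegral.integral_const_mul, integral_B_scale (n+1) m hm0]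
    have hB : B (n+1+1) (m:ℝ) - B (n+1+1) 0
        = ((n:ℝ)+1+1) * ∑ j ∈ Finset.range m, (j:ℝ)^(n+1) := by
      rw [B_nat (n+1) m]; push_cast; ring
    rw [hB]
    have hrhs : ∑ k ∈ Finset.range m, ((k:ℝ)/m)^(n+1)
        = (∑ j ∈ Finset.range m, (j:ℝ)^(n+1)) / (m:ℝ)^(n+1) := by
      rw [Finset.sum_div]; exact Finset.sum_congr rfl fun k _ => div_pow _ _ _
    rw [hrhs]
    have h2 : ((n:ℝ)+1+1) ≠ 0 := by positivity
    push_cast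
    field_simp
    ring
  have hQ0 : Q.eval 0 = 0 := by
    have hfun : ∀ t : ℝ, (∑ k ∈ Finset.range m, B (n+1) (t + (k:ℝ)/m))
        - ((m:ℝ)^n)⁻¹ * B (n+1) ((m:ℝ) * t) = Q.eval 0 := fun t => by
      rw [← evalQ t, hconst t]
    have key : ∫ t in (0:ℝ)..1, ((∑ k ∈ Finset.range m, B (n+1) (t + (k:ℝ)/m))
        - ((m:ℝ)^n)⁻¹ * B (n+1) ((m:ℝ) * t)) = Q.eval 0 := by
      simp only [hfun]
      simp
    have hintsum : IntervalIntegrable (fun t => ∑ k ∈ Finset.range m, B (n+1) (t + (k:ℝ)/m))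
        MeasureTheory.volume 0 1 := by
      apply Continuous.intervalIntegrable
      exact continuous_finset_sum _ fun k _ =>
        (continuous_B _).comp (continuous_id.add continuous_const)
    rw [intervalIntegral.integral_sub hintsum hint2, hg, hh] at key
    simpa using key.symm
  have hx := hconst x
  rw [evalQ x, hQ0] at hx
  rw [hzp]
  linarith [hx]
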